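/- arXiv:1603.08389 — 4 statements merged into one kernel-verified Lean document; each statement's English description precedes it below -/
import Mathlib

section
/- There exists a hidden Markov model on a 5-element state space in which the intrinsic σ-algebra is strictly coarser than the minimal separately measurable σ-algebra. Concretely: W = {1,...,5}, S = {0,1}, one action; β(1) = β(4) = β(5) = (δ_0 + δ_1)/2, β(2) = δ_0, β(3) = δ_1; α(1) = (δ_2 + δ_3)/2, α(2) = α(3) = α(4) = δ_4, α(5) = δ_5. Then states 1, 4, 5 are sensorily equivalent (they induce the same law of the sensor sequence), so the atoms of 𝒲_int are {1,4,5}, {2}, {3}; while the atoms of 𝒲_sep are {1}, {2}, {3}, {4,5}. Hence 𝒲_int ⊊ 𝒲_sep. -/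
open MeasureTheory
open scoped ENNReal

/-- The σ-algebra on `W` generated by the kernel `β : W → 𝒫(S)`, i.e. by the
evaluation maps `w ↦ β w B` for measurable `B ⊆ S`. -/
def sigmaBeta {W S : Type*} [MeasurableSpace S] (β : W → Measure S) :
    MeasurableSpace W :=
  ⨆ (B : Set S) (_ : MeasurableSet B),
    MeasurableSpace.comap (fun w => β w B) inferInstance

/-- The recursively defined σ-algebras `𝒲_0 = σ(β)`,
`𝒲_n = σ( w ↦ α_a(w)(B) : a ∈ A, B ∈ 𝒲_{n-1} )`. -/
def WnSeq {W S A : Type*} [MeasurableSpace W] [MeasurableSpace S]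
    (β : W → Measure S) (α : A → W → Measure W) : ℕ → MeasurableSpace W
  | 0 => sigmaBeta β
  | n + 1 =>
    ⨆ (a : A) (B : Set W) (_ : MeasurableSet[WnSeq β α n] B),
      MeasurableSpace.comap (fun w => α a w B) inferInstance

/-- `𝒲_sep := σ(⋃ n, 𝒲_n)`. -/
def Wsep {W S A : Type*} [MeasurableSpace W] [MeasurableSpace S]
    (β : W → Measure S) (α : A → W → Measure W) : MeasurableSpace W :=
  ⨆ n, WnSeq β α n


/-- The probability that the sensor sequence, started at world state `w` under the forced
action sequence `a`, lies in the cylinder `B₁ × ⋯ × Bₙ × S × ⋯` (given as a list).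
This encodes the law `P_S^{a_ℕ}(w) ∈ 𝒫(S^ℕ)` via its cylinder probabilities. -/
noncomputable def PS {W S A : Type*} [MeasurableSpace W] [MeasurableSpace S]
    (β : W → Measure S) (α : A → W → Measure W) :
    List (Set S) → W → (ℕ → A) → ℝ≥0∞
  | [], _, _ => 1
  | B :: Bs, w, a =>
    β w B * ∫⁻ w', PS β α Bs w' (fun n => a (n + 1)) ∂(α (a 0) w)

/-- The intrinsic σ-algebra `𝒲_int := σ( P_S^{a_ℕ} : a_ℕ ∈ A^ℕ )`, generated by the
cylinder evaluations of the sensor-sequence laws. -/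
noncomputable def Wint {W S A : Type*} [MeasurableSpace W] [MeasurableSpace S]
    (β : W → Measure S) (α : A → W → Measure W) : MeasurableSpace W :=
  ⨆ (a : ℕ → A) (Bs : List (Set S)) (_ : ∀ B ∈ Bs, MeasurableSet B),
    MeasurableSpace.comap (fun w => PS β α Bs w a) inferInstance

/-- Sensory equivalence: `w ∼ w'` iff `P_S^{a_ℕ}(w) = P_S^{a_ℕ}(w')` for every action
sequence `a_ℕ` (equality of all cylinder probabilities). -/
def sensEquiv {W S A : Type*} [MeasurableSpace W] [MeasurableSpace S]
    (β : W → Measure S) (α : A → W → Measure W) (w w' : W) : Prop :=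
  ∀ (a : ℕ → A) (Bs : List (Set S)), (∀ B ∈ Bs, MeasurableSet B) →
    PS β α Bs w a = PS β α Bs w' a

/-- The atom of the σ-algebra `m` containing `x`. -/
def atomOf {X : Type*} (m : MeasurableSpace X) (x : X) : Set X :=
  ⋂₀ {F : Set X | MeasurableSet[m] F ∧ x ∈ F}


/-- The sensor kernel of the five-state example (states `0,…,4` stand for `1,…,5`):
`β(1) = β(4) = β(5) = (δ₀ + δ₁)/2`, `β(2) = δ₀`, `β(3) = δ₁`. -/
noncomputable def betaEx : Fin 5 → MeasureTheory.Measure (Fin 2) := fun w =>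
  if w = 1 then MeasureTheory.Measure.dirac 0
  else if w = 2 then MeasureTheory.Measure.dirac 1
  else (2⁻¹ : ℝ≥0∞) • MeasureTheory.Measure.dirac 0 +
       (2⁻¹ : ℝ≥0∞) • MeasureTheory.Measure.dirac 1

/-- The (action-independent) world update kernel of the example:
`α(1) = (δ₂ + δ₃)/2`, `α(2) = α(3) = α(4) = δ₄`, `α(5) = δ₅`. -/
noncomputable def alphaEx : Unit → Fin 5 → MeasureTheory.Measure (Fin 5) := fun _ w =>
  if w = 0 then (2⁻¹ : ℝ≥0∞) • MeasureTheory.Measure.dirac 1 +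
                (2⁻¹ : ℝ≥0∞) • MeasureTheory.Measure.dirac 2
  else if w = 4 then MeasureTheory.Measure.dirac 4
  else MeasureTheory.Measure.dirac 3


namespace Stmt10Aux
noncomputable def mu2 : Measure (Fin 2) :=
  (2⁻¹ : ℝ≥0∞) • Measure.dirac 0 + (2⁻¹ : ℝ≥0∞) • Measure.dirac 1

lemma betaEx0 : betaEx 0 = mu2 := by
  show (if (0:Fin 5) = 1 then _ else _) = mu2
  rw [if_neg (by decide), if_neg (by decide)]; rfl
lemma betaEx3 : betaEx 3 = mu2 := by
  show (if (3:Fin 5) = 1 then _ else _) = mu2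
  rw [if_neg (by decide), if_neg (by decide)]; rfl
lemma betaEx4 : betaEx 4 = mu2 := by
  show (if (4:Fin 5) = 1 then _ else _) = mu2
  rw [if_neg (by decide), if_neg (by decide)]; rfl
lemma betaEx1 : betaEx 1 = Measure.dirac 0 := by
  show (if (1:Fin 5) = 1 then _ else _) = _
  rw [if_pos rfl]
lemma betaEx2 : betaEx 2 = Measure.dirac 1 := by
  show (if (2:Fin 5) = 1 then _ else _) = _
  rw [if_neg (by decide), if_pos rfl]
lemma alphaEx0 (a : Unit) : alphaEx a 0 =
    (2⁻¹ : ℝ≥0∞) • Measure.dirac 1 + (2⁻¹ : ℝ≥0∞) • Measure.dirac 2 := by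
  show (if (0:Fin 5) = 0 then _ else _) = _
  rw [if_pos rfl]
lemma alphaEx1 (a : Unit) : alphaEx a 1 = Measure.dirac 3 := by
  show (if (1:Fin 5) = 0 then _ else _) = _
  rw [if_neg (by decide), if_neg (by decide)]
lemma alphaEx2 (a : Unit) : alphaEx a 2 = Measure.dirac 3 := by
  show (if (2:Fin 5) = 0 then _ else _) = _
  rw [if_neg (by decide), if_neg (by decide)]
lemma alphaEx3 (a : Unit) : alphaEx a 3 = Measure.dirac 3 := by
  show (if (3:Fin 5) = 0 then _ else _) = _
  rw [if_neg (by decide), if_neg (by decide)]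
lemma alphaEx4 (a : Unit) : alphaEx a 4 = Measure.dirac 4 := by
  show (if (4:Fin 5) = 0 then _ else _) = _
  rw [if_neg (by decide), if_pos rfl]

noncomputable def prodMu : List (Set (Fin 2)) → ℝ≥0∞
  | [] => 1
  | B :: Bs => mu2 B * prodMu Bs

noncomputable def headD (x : Fin 2) : List (Set (Fin 2)) → ℝ≥0∞
  | [] => 1
  | B :: Bs => Measure.dirac x B * prodMu Bs

lemma half_headD (Bs : List (Set (Fin 2))) :
    2⁻¹ * headD 0 Bs + 2⁻¹ * headD 1 Bs = prodMu Bs := by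
  cases Bs with
  | nil => simp [headD, prodMu, ENNReal.inv_two_add_inv_two]
  | cons C Cs =>
    simp only [headD, prodMu, mu2, Measure.add_apply, Measure.smul_apply, smul_eq_mul]
    ring

lemma PS_eval (Bs : List (Set (Fin 2))) (a : ℕ → Unit) :
    PS betaEx alphaEx Bs 0 a = prodMu Bs ∧
    PS betaEx alphaEx Bs 3 a = prodMu Bs ∧
    PS betaEx alphaEx Bs 4 a = prodMu Bs ∧
    PS betaEx alphaEx Bs 1 a = headD 0 Bs ∧
    PS betaEx alphaEx Bs 2 a = headD 1 Bs := by
  induction Bs generalizing a with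
  | nil => simp [PS, prodMu, headD]
  | cons B Bs ih =>
    obtain ⟨h0, h3, h4, h1, h2⟩ := ih (fun n => a (n + 1))
    refine ⟨?_, ?_, ?_, ?_, ?_⟩
    · show betaEx 0 B * _ = _
      rw [betaEx0, alphaEx0, lintegral_add_measure, lintegral_smul_measure,
        lintegral_smul_measure, lintegral_dirac, lintegral_dirac, h1, h2,
        smul_eq_mul, smul_eq_mul, half_headD]
      rfl
    · show betaEx 3 B * _ = _
      rw [betaEx3, alphaEx3, lintegral_dirac, h3]; rfl
    · show betaEx 4 B * _ = _
      rw [betaEx4, alphaEx4, lintegral_dirac, h4]; rfl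
    · show betaEx 1 B * _ = _
      rw [betaEx1, alphaEx1, lintegral_dirac, h3]; rfl
    · show betaEx 2 B * _ = _
      rw [betaEx2, alphaEx2, lintegral_dirac, h3]; rfl
lemma mu2_zero : mu2 {0} = 2⁻¹ := by
  simp [mu2, Measure.add_apply, Measure.smul_apply, Measure.dirac_apply, Set.indicator,
    smul_eq_mul]
lemma prodMu_single : prodMu [{0}] = 2⁻¹ := by
  simp [prodMu, mu2_zero]
lemma headD0_single : headD 0 [{0}] = 1 := by
  simp [headD, prodMu, Measure.dirac_apply, Set.indicator]
lemma headD1_single : headD 1 [{0}] = 0 := by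
  simp [headD, prodMu, Measure.dirac_apply, Set.indicator]

lemma equiv03 : sensEquiv betaEx alphaEx 0 3 := fun a Bs _ =>
  ((PS_eval Bs a).1).trans ((PS_eval Bs a).2.1).symm
lemma equiv04 : sensEquiv betaEx alphaEx 0 4 := fun a Bs _ =>
  ((PS_eval Bs a).1).trans ((PS_eval Bs a).2.2.1).symm
lemma nequiv01 : ¬ sensEquiv betaEx alphaEx 0 1 := by
  intro h
  have := h (fun _ => ()) [{0}] (fun B _ => trivial)
  rw [(PS_eval [{0}] _).1, (PS_eval [{0}] _).2.2.2.1, prodMu_single, headD0_single] at this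
  norm_num at this
lemma nequiv02 : ¬ sensEquiv betaEx alphaEx 0 2 := by
  intro h
  have := h (fun _ => ()) [{0}] (fun B _ => trivial)
  rw [(PS_eval [{0}] _).1, (PS_eval [{0}] _).2.2.2.2, prodMu_single, headD1_single] at this
  norm_num at this
lemma nequiv12 : ¬ sensEquiv betaEx alphaEx 1 2 := by
  intro h
  have := h (fun _ => ()) [{0}] (fun B _ => trivial)
  rw [(PS_eval [{0}] _).2.2.2.1, (PS_eval [{0}] _).2.2.2.2, headD0_single,
    headD1_single] at this
  norm_num at this
def h3' : Fin 5 → Fin 3 := fun w => if w = 1 then 1 else if w = 2 then 2 else 0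
def e3 : Fin 3 → Fin 5 := fun k => if k = 1 then 1 else if k = 2 then 2 else 0
def h4' : Fin 5 → Fin 4 := fun w =>
  if w = 0 then 0 else if w = 1 then 1 else if w = 2 then 2 else 3
def e4 : Fin 4 → Fin 5 := fun k =>
  if k = 0 then 0 else if k = 1 then 1 else if k = 2 then 2 else 3

lemma comap_factor {X Y Z : Type*} {mZ : MeasurableSpace Z} (h : X → Y) (f : X → Z)
    (g : Y → Z) (hf : f = g ∘ h) :
    MeasurableSpace.comap f mZ ≤ MeasurableSpace.comap h ⊤ := by
  rw [hf, ← MeasurableSpace.comap_comp]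
  exact MeasurableSpace.comap_mono le_top

lemma atomOf_eq {X : Type*} {m : MeasurableSpace X} {x : X} {T : Set X}
    (hT : MeasurableSet[m] T) (hx : x ∈ T)
    (hmin : ∀ F, MeasurableSet[m] F → x ∈ F → T ⊆ F) : atomOf m x = T := by
  apply subset_antisymm
  · exact Set.sInter_subset_of_mem ⟨hT, hx⟩
  · exact Set.subset_sInter fun F hF => hmin F hF.1 hF.2

lemma atomOf_singleton {X : Type*} {m : MeasurableSpace X} {x : X}
    (hx : MeasurableSet[m] ({x} : Set X)) : atomOf m x = {x} :=
  atomOf_eq hx rfl (fun _ _ hxF => Set.singleton_subset_iff.2 hxF)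

lemma Wint_le : Wint betaEx alphaEx ≤ MeasurableSpace.comap h3' ⊤ := by
  refine iSup_le fun a => iSup_le fun Bs => iSup_le fun _ =>
    comap_factor h3' _ (fun k => PS betaEx alphaEx Bs (e3 k) a) ?_
  obtain ⟨p0, p3, p4, p1, p2⟩ := PS_eval Bs a
  funext w
  fin_cases w <;> simp [h3', e3]
  · rw [p3, p0]
  · rw [p4, p0]

lemma WnSeq_le (n : ℕ) : WnSeq betaEx alphaEx n ≤ MeasurableSpace.comap h4' ⊤ := by
  induction n with
  | zero =>
    refine iSup_le fun B => iSup_le fun _ =>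
      comap_factor h4' _ (fun k => betaEx (e4 k) B) ?_
    funext w
    fin_cases w <;> simp [h4', e4]
    rw [betaEx3, betaEx4]
  | succ n ih =>
    refine iSup_le fun a => iSup_le fun B => iSup_le fun hB =>
      comap_factor h4' _ (fun k => alphaEx a (e4 k) B) ?_
    obtain ⟨C, -, rfl⟩ := MeasurableSpace.measurableSet_comap.1 (ih _ hB)
    funext w
    fin_cases w <;> simp [h4', e4]
    rw [alphaEx3, alphaEx4]
    by_cases hm : (3:Fin 4) ∈ C
    · rw [Measure.dirac_apply_of_mem, Measure.dirac_apply_of_mem] <;>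
        simpa [Set.mem_preimage, h4']
    · rw [Measure.dirac_apply, Measure.dirac_apply]
      simp [Set.indicator_apply, Set.mem_preimage, h4', hm]

lemma Wsep_le : Wsep betaEx alphaEx ≤ MeasurableSpace.comap h4' ⊤ :=
  iSup_le WnSeq_le
lemma bval0 : betaEx 0 {0} = 2⁻¹ := by rw [betaEx0, mu2_zero]
lemma bval3 : betaEx 3 {0} = 2⁻¹ := by rw [betaEx3, mu2_zero]
lemma bval4 : betaEx 4 {0} = 2⁻¹ := by rw [betaEx4, mu2_zero]
lemma bval1 : betaEx 1 {0} = 1 := by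
  rw [betaEx1]; exact Measure.dirac_apply_of_mem rfl
lemma bval2 : betaEx 2 {0} = 0 := by
  rw [betaEx2, Measure.dirac_apply]; simp
lemma aval0 : alphaEx () 0 {1} = 2⁻¹ := by
  rw [alphaEx0]
  simp [Measure.add_apply, Measure.smul_apply, Measure.dirac_apply, Set.indicator_apply,
    smul_eq_mul]
lemma aval1 : alphaEx () 1 {1} = 0 := by
  rw [alphaEx1, Measure.dirac_apply]; simp
lemma aval2 : alphaEx () 2 {1} = 0 := by
  rw [alphaEx2, Measure.dirac_apply]; simp
lemma aval3 : alphaEx () 3 {1} = 0 := by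
  rw [alphaEx3, Measure.dirac_apply]; simp
lemma aval4 : alphaEx () 4 {1} = 0 := by
  rw [alphaEx4, Measure.dirac_apply]; simp

lemma measWint1 : MeasurableSet[Wint betaEx alphaEx] ({1} : Set (Fin 5)) := by
  have hle : MeasurableSpace.comap
      (fun w => PS betaEx alphaEx [{0}] w (fun _ => ())) inferInstance ≤
      Wint betaEx alphaEx :=
    le_iSup_of_le (fun _ => ()) (le_iSup_of_le [{0}]
      (le_iSup_of_le (fun B _ => trivial) le_rfl))
  have hset : ({1} : Set (Fin 5)) =
      (fun w => PS betaEx alphaEx [{0}] w (fun _ => ())) ⁻¹' {1} := by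
    ext w
    obtain ⟨p0, p3, p4, p1, p2⟩ := PS_eval [{0}] (fun _ => ())
    fin_cases w <;>
      simp [p0, p3, p4, p1, p2, prodMu_single, headD0_single, headD1_single] <;>
      norm_num
  rw [hset]
  exact hle _ (MeasurableSpace.measurableSet_comap.2
    ⟨{1}, measurableSet_singleton _, rfl⟩)

lemma measWint2 : MeasurableSet[Wint betaEx alphaEx] ({2} : Set (Fin 5)) := by
  have hle : MeasurableSpace.comap
      (fun w => PS betaEx alphaEx [{0}] w (fun _ => ())) inferInstance ≤
      Wint betaEx alphaEx :=
    le_iSup_of_le (fun _ => ()) (le_iSup_of_le [{0}]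
      (le_iSup_of_le (fun B _ => trivial) le_rfl))
  have hset : ({2} : Set (Fin 5)) =
      (fun w => PS betaEx alphaEx [{0}] w (fun _ => ())) ⁻¹' {0} := by
    ext w
    obtain ⟨p0, p3, p4, p1, p2⟩ := PS_eval [{0}] (fun _ => ())
    fin_cases w <;>
      simp [p0, p3, p4, p1, p2, prodMu_single, headD0_single, headD1_single] <;>
      norm_num
  rw [hset]
  exact hle _ (MeasurableSpace.measurableSet_comap.2
    ⟨{0}, measurableSet_singleton _, rfl⟩)

lemma measWint034 : MeasurableSet[Wint betaEx alphaEx] ({0, 3, 4} : Set (Fin 5)) := by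
  have hset : ({0, 3, 4} : Set (Fin 5)) = (({1} : Set (Fin 5)) ∪ {2})ᶜ := by
    ext w; fin_cases w <;> simp
  rw [hset]
  exact (measWint1.union measWint2).compl

lemma measSB1 : MeasurableSet[sigmaBeta betaEx] ({1} : Set (Fin 5)) := by
  have hle : MeasurableSpace.comap (fun w => betaEx w {0}) inferInstance ≤
      sigmaBeta betaEx :=
    le_iSup_of_le ({0} : Set (Fin 2)) (le_iSup_of_le trivial le_rfl)
  have hset : ({1} : Set (Fin 5)) = (fun w => betaEx w {0}) ⁻¹' {1} := by
    ext w
    fin_cases w <;> simp [bval0, bval1, bval2, bval3, bval4] <;> norm_num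
  rw [hset]
  exact hle _ (MeasurableSpace.measurableSet_comap.2
    ⟨{1}, measurableSet_singleton _, rfl⟩)

lemma measSB2 : MeasurableSet[sigmaBeta betaEx] ({2} : Set (Fin 5)) := by
  have hle : MeasurableSpace.comap (fun w => betaEx w {0}) inferInstance ≤
      sigmaBeta betaEx :=
    le_iSup_of_le ({0} : Set (Fin 2)) (le_iSup_of_le trivial le_rfl)
  have hset : ({2} : Set (Fin 5)) = (fun w => betaEx w {0}) ⁻¹' {0} := by
    ext w
    fin_cases w <;> simp [bval0, bval1, bval2, bval3, bval4] <;> norm_num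
  rw [hset]
  exact hle _ (MeasurableSpace.measurableSet_comap.2
    ⟨{0}, measurableSet_singleton _, rfl⟩)

lemma sigmaBeta_le_Wsep : sigmaBeta betaEx ≤ Wsep betaEx alphaEx :=
  le_iSup (WnSeq betaEx alphaEx) 0

lemma measWsep1 : MeasurableSet[Wsep betaEx alphaEx] ({1} : Set (Fin 5)) :=
  sigmaBeta_le_Wsep _ measSB1

lemma measWsep2 : MeasurableSet[Wsep betaEx alphaEx] ({2} : Set (Fin 5)) :=
  sigmaBeta_le_Wsep _ measSB2

lemma measWsep0 : MeasurableSet[Wsep betaEx alphaEx] ({0} : Set (Fin 5)) := by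
  have hle : MeasurableSpace.comap (fun w => alphaEx () w {1}) inferInstance ≤
      Wsep betaEx alphaEx := by
    refine le_trans ?_ (le_iSup (WnSeq betaEx alphaEx) 1)
    exact le_iSup_of_le () (le_iSup_of_le ({1} : Set (Fin 5))
      (le_iSup_of_le measSB1 le_rfl))
  have hset : ({0} : Set (Fin 5)) = (fun w => alphaEx () w {1}) ⁻¹' {2⁻¹} := by
    ext w
    fin_cases w <;> simp [aval0, aval1, aval2, aval3, aval4] <;>
      exact (ENNReal.inv_ne_zero.mpr ENNReal.ofNat_ne_top).symm
  rw [hset]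
  exact hle _ (MeasurableSpace.measurableSet_comap.2
    ⟨{2⁻¹}, measurableSet_singleton _, rfl⟩)

lemma measWsep34 : MeasurableSet[Wsep betaEx alphaEx] ({3, 4} : Set (Fin 5)) := by
  have hset : ({3, 4} : Set (Fin 5)) = (({0} : Set (Fin 5)) ∪ {1} ∪ {2})ᶜ := by
    ext w; fin_cases w <;> simp
  rw [hset]
  exact ((measWsep0.union measWsep1).union measWsep2).compl

lemma measWsep034 : MeasurableSet[Wsep betaEx alphaEx] ({0, 3, 4} : Set (Fin 5)) := by
  have hset : ({0, 3, 4} : Set (Fin 5)) = ({0} : Set (Fin 5)) ∪ {3, 4} := by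
    ext w; fin_cases w <;> simp
  rw [hset]
  exact measWsep0.union measWsep34
lemma atomWint0 : atomOf (Wint betaEx alphaEx) 0 = {0, 3, 4} := by
  refine atomOf_eq measWint034 (by simp) ?_
  intro F hF h0F
  obtain ⟨C, -, rfl⟩ := MeasurableSpace.measurableSet_comap.1 (Wint_le _ hF)
  have h0C : (0 : Fin 3) ∈ C := by simpa [h3', Set.mem_preimage] using h0F
  intro y hy
  simp only [Set.mem_insert_iff, Set.mem_singleton_iff] at hy
  rcases hy with rfl | rfl | rfl <;> simpa [h3', Set.mem_preimage] using h0C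

lemma atomWsep3 : atomOf (Wsep betaEx alphaEx) 3 = {3, 4} := by
  refine atomOf_eq measWsep34 (by simp) ?_
  intro F hF h3F
  obtain ⟨C, -, rfl⟩ := MeasurableSpace.measurableSet_comap.1 (Wsep_le _ hF)
  have h3C : (3 : Fin 4) ∈ C := by simpa [h4', Set.mem_preimage] using h3F
  intro y hy
  simp only [Set.mem_insert_iff, Set.mem_singleton_iff] at hy
  rcases hy with rfl | rfl <;> simpa [h4', Set.mem_preimage] using h3C

lemma Wint_le_Wsep : Wint betaEx alphaEx ≤ Wsep betaEx alphaEx := by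
  intro s hs
  obtain ⟨C, -, rfl⟩ := MeasurableSpace.measurableSet_comap.1 (Wint_le _ hs)
  have hU : h3' ⁻¹' C = ⋃ c ∈ C, h3' ⁻¹' {c} := by ext w; simp
  rw [hU]
  refine MeasurableSet.biUnion (Set.to_countable C) fun c _ => ?_
  have hc : h3' ⁻¹' {c} =
      if c = 0 then ({0, 3, 4} : Set (Fin 5)) else if c = 1 then {1} else {2} := by
    ext w; fin_cases c <;> fin_cases w <;> simp [h3']
  rw [hc]
  split_ifs
  · exact measWsep034
  · exact measWsep1
  · exact measWsep2

lemma Wint_lt_Wsep : Wint betaEx alphaEx < Wsep betaEx alphaEx := by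
  refine lt_of_le_of_ne Wint_le_Wsep fun hEq => ?_
  have h0 : MeasurableSet[Wint betaEx alphaEx] ({0} : Set (Fin 5)) := by
    rw [hEq]; exact measWsep0
  obtain ⟨C, -, hC⟩ := MeasurableSpace.measurableSet_comap.1 (Wint_le _ h0)
  have hm0 : (0 : Fin 5) ∈ h3' ⁻¹' C := by rw [hC]; simp
  have hm3 : (3 : Fin 5) ∈ h3' ⁻¹' C := by
    simp only [Set.mem_preimage] at hm0 ⊢
    simpa [h3'] using hm0
  rw [hC] at hm3
  simp at hm3

end Stmt10Aux

/-- in the five-state hidden Markov model above, the states `1, 4, 5`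
(here `0, 3, 4`) are sensorily equivalent while `2, 3` (here `1, 2`) are not equivalent
to them or to each other; the atoms of `𝒲_int` are `{1,4,5}, {2}, {3}` and the atoms of
`𝒲_sep` are `{1}, {2}, {3}, {4,5}`; hence `𝒲_int ⊊ 𝒲_sep`. -/
theorem stmt10 :
    sensEquiv betaEx alphaEx 0 3 ∧ sensEquiv betaEx alphaEx 0 4 ∧
    ¬ sensEquiv betaEx alphaEx 0 1 ∧ ¬ sensEquiv betaEx alphaEx 0 2 ∧
    ¬ sensEquiv betaEx alphaEx 1 2 ∧
    atomOf (Wint betaEx alphaEx) 0 = {0, 3, 4} ∧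
    atomOf (Wint betaEx alphaEx) 1 = {1} ∧
    atomOf (Wint betaEx alphaEx) 2 = {2} ∧
    atomOf (Wsep betaEx alphaEx) 0 = {0} ∧
    atomOf (Wsep betaEx alphaEx) 1 = {1} ∧
    atomOf (Wsep betaEx alphaEx) 2 = {2} ∧
    atomOf (Wsep betaEx alphaEx) 3 = {3, 4} ∧
    Wint betaEx alphaEx < Wsep betaEx alphaEx := by
  refine ⟨Stmt10Aux.equiv03, Stmt10Aux.equiv04, Stmt10Aux.nequiv01, Stmt10Aux.nequiv02,
    Stmt10Aux.nequiv12, Stmt10Aux.atomWint0,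
    Stmt10Aux.atomOf_singleton Stmt10Aux.measWint1,
    Stmt10Aux.atomOf_singleton Stmt10Aux.measWint2,
    Stmt10Aux.atomOf_singleton Stmt10Aux.measWsep0,
    Stmt10Aux.atomOf_singleton Stmt10Aux.measWsep1,
    Stmt10Aux.atomOf_singleton Stmt10Aux.measWsep2,
    Stmt10Aux.atomWsep3, Stmt10Aux.Wint_lt_Wsep⟩
end

section
/- Let W be a compact metrizable space, S a measurable space, and suppose β : W → 𝒫(S) and each α_a : W → 𝒫(W) (a ∈ A) are continuous, where 𝒫(W) carries the weak topology. Then for every action sequence a_ℕ ∈ A^ℕ, the map w ↦ P_S^{a_ℕ}(w) from W to 𝒫(S^ℕ) is continuous (with respect to the topology of convergence of finite-dimensional cylinder probabilities). -/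
open MeasureTheory
open scoped ENNReal NNReal
open BoundedContinuousFunction

/-- The expectation `E[ g₁(S₁) ⋯ gₙ(Sₙ) ]` of a finite product of test functions of the
sensor sequence, started at world state `w` under forced actions `a`.  These functionals
determine the law `P_S^{a_ℕ}(w)` of the sensor sequence in the topology of weak
convergence of finite-dimensional (cylinder) distributions. -/
noncomputable def PSE {W S A : Type*} [MeasurableSpace W] [MeasurableSpace S]
    (β : W → Measure S) (α : A → W → Measure W) :
    List (S → ℝ≥0) → W → (ℕ → A) → ℝ≥0∞
  | [], _, _ => 1
  | g :: gs, w, a =>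
    (∫⁻ s, (g s : ℝ≥0∞) ∂(β w)) *
      ∫⁻ w', PSE β α gs w' (fun n => a (n + 1)) ∂(α (a 0) w)

/-- Integration of a bounded continuous `ℝ≥0`-valued function against a continuously
varying probability measure is continuous. -/
lemma continuous_lintegral_kernel {X Y : Type*} [TopologicalSpace X]
    [TopologicalSpace Y] [MeasurableSpace Y] [OpensMeasurableSpace Y]
    (κ : X → ProbabilityMeasure Y) (hκ : Continuous κ) (f : Y →ᵇ ℝ≥0) :
    Continuous fun x => ∫⁻ y, (f y : ℝ≥0∞) ∂(κ x : Measure Y) := by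
  rw [continuous_iff_continuousAt]
  intro x
  exact MeasureTheory.ProbabilityMeasure.tendsto_iff_forall_lintegral_tendsto.mp
    (hκ.continuousAt) f

lemma PSE_repr {W S A : Type*}
    [TopologicalSpace W] [CompactSpace W] [TopologicalSpace.MetrizableSpace W]
    [MeasurableSpace W] [OpensMeasurableSpace W]
    [TopologicalSpace S] [CompactSpace S] [TopologicalSpace.MetrizableSpace S]
    [MeasurableSpace S] [OpensMeasurableSpace S]
    (β : W → ProbabilityMeasure S) (α : A → W → ProbabilityMeasure W)
    (hβ : Continuous β) (hα : ∀ a : A, Continuous (α a))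
    (gs : List (S → ℝ≥0)) (hgs : ∀ g ∈ gs, Continuous g) :
    ∀ (a : ℕ → A), ∃ F : W →ᵇ ℝ≥0, ∀ w,
      PSE (fun w => (β w : Measure S)) (fun a w => (α a w : Measure W)) gs w a
        = (F w : ℝ≥0∞) := by
  induction gs with
  | nil =>
      intro a
      exact ⟨1, fun w => by simp [PSE]⟩
  | cons g gs ih =>
      intro a
      obtain ⟨F, hF⟩ := ih (fun g' hg' => hgs g' (List.mem_cons_of_mem _ hg'))
        (fun n => a (n + 1))
      have hg : Continuous g := hgs g List.mem_cons_self
      set G : S →ᵇ ℝ≥0 := BoundedContinuousFunction.mkOfCompact ⟨g, hg⟩ with hG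
      have h1 : Continuous fun w => ∫⁻ s, (g s : ℝ≥0∞) ∂(β w : Measure S) := by
        have := continuous_lintegral_kernel β hβ G
        simpa [hG] using this
      have h2 : Continuous fun w => ∫⁻ w', (F w' : ℝ≥0∞) ∂(α (a 0) w : Measure W) :=
        continuous_lintegral_kernel (α (a 0)) (hα (a 0)) F
      have h1t : ∀ w, (∫⁻ s, (g s : ℝ≥0∞) ∂(β w : Measure S)) ≠ ∞ := by
        intro w
        have := G.lintegral_lt_top_of_nnreal (β w : Measure S)
        simpa [hG] using this.ne
      have h2t : ∀ w, (∫⁻ w', (F w' : ℝ≥0∞) ∂(α (a 0) w : Measure W)) ≠ ∞ :=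
        fun w => (F.lintegral_lt_top_of_nnreal _).ne
      have hc : Continuous fun w =>
          (∫⁻ s, (g s : ℝ≥0∞) ∂(β w : Measure S)).toNNReal *
          (∫⁻ w', (F w' : ℝ≥0∞) ∂(α (a 0) w : Measure W)).toNNReal := by
        apply Continuous.mul
        · rw [continuous_iff_continuousAt]
          intro w
          exact (ENNReal.tendsto_toNNReal (h1t w)).comp (h1.continuousAt)
        · rw [continuous_iff_continuousAt]
          intro w
          exact (ENNReal.tendsto_toNNReal (h2t w)).comp (h2.continuousAt)
      refine ⟨BoundedContinuousFunction.mkOfCompact ⟨_, hc⟩, fun w => ?_⟩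
      simp only [PSE, BoundedContinuousFunction.mkOfCompact_apply, ContinuousMap.coe_mk]
      rw [ENNReal.coe_mul, ENNReal.coe_toNNReal (h1t w), ENNReal.coe_toNNReal (h2t w)]
      congr 1
      exact lintegral_congr fun w' => by rw [hF w']

/-- if `W` is compact metrizable and the kernels `β : W → 𝒫(S)` and
`α_a : W → 𝒫(W)` are continuous (weak topology), then for every action sequence `a_ℕ`
the map `w ↦ P_S^{a_ℕ}(w)` is continuous for the topology of convergence of
finite-dimensional cylinder distributions, i.e. all finite-dimensional expectations of
continuous test functions depend continuously on `w`. -/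
theorem stmt11 {W S A : Type*}
    [TopologicalSpace W] [CompactSpace W] [TopologicalSpace.MetrizableSpace W]
    [MeasurableSpace W] [OpensMeasurableSpace W]
    [TopologicalSpace S] [CompactSpace S] [TopologicalSpace.MetrizableSpace S]
    [MeasurableSpace S] [OpensMeasurableSpace S]
    (β : W → ProbabilityMeasure S) (α : A → W → ProbabilityMeasure W)
    (hβ : Continuous β) (hα : ∀ a : A, Continuous (α a)) :
    ∀ (a : ℕ → A) (gs : List (S → ℝ≥0)), (∀ g ∈ gs, Continuous g) →
      Continuous fun w =>
        PSE (fun w => (β w : Measure S)) (fun a w => (α a w : Measure W)) gs w a := by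
  intro a gs hgs
  obtain ⟨F, hF⟩ := PSE_repr β α hβ hα gs hgs a
  have h : Continuous fun w => ((F w : ℝ≥0) : ℝ≥0∞) :=
    ENNReal.continuous_coe.comp F.continuous
  simpa only [← hF] using h
end

section
/- Let W be a finite set, and suppose α' : W → 𝒫(W) is defined by α'(w) := α(ς(w)) where ς : W → W satisfies: ς(w) is sensorily equivalent to w for all w (i.e. P_S^{a_ℕ}(ς(w)) = P_S^{a_ℕ}(w) for all action sequences a_ℕ). Then α' is equivalent to α: for all w and all a_ℕ, the sensor-sequence law computed with update kernels α'_a equals P_S^{a_ℕ}(w). -/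
open MeasureTheory
open scoped ENNReal

/-- for a finite world `W`, if `ς : W → W` maps every state to a sensorily
equivalent state, then the modified update kernels `α'_a(w) := α_a(ς(w))` are equivalent
to `α`: all sensor-sequence laws are unchanged. -/
theorem stmt14 {W S A : Type*} [Finite W] [MeasurableSpace W] [MeasurableSpace S]
    (β : W → Measure S) (α : A → W → Measure W)
    (hβprob : ∀ w, IsProbabilityMeasure (β w))
    (hαprob : ∀ a w, IsProbabilityMeasure (α a w))
    (ς : W → W)
    (hς : ∀ w : W, sensEquiv β α (ς w) w) :
    ∀ (w : W) (a : ℕ → A) (Bs : List (Set S)), (∀ B ∈ Bs, MeasurableSet B) →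
      PS β (fun a w => α a (ς w)) Bs w a = PS β α Bs w a := by
  intro w a Bs
  induction Bs generalizing w a with
  | nil => intro _; rfl
  | cons B Bs ih =>
    intro hmeas
    have hB : MeasurableSet B := hmeas B (by simp)
    have hBs : ∀ C ∈ Bs, MeasurableSet C := fun C hC => hmeas C (by simp [hC])
    show β w B * ∫⁻ w', PS β (fun a w => α a (ς w)) Bs w' (fun n => a (n + 1))
        ∂(α (a 0) (ς w))
      = β w B * ∫⁻ w', PS β α Bs w' (fun n => a (n + 1)) ∂(α (a 0) w)
    have hint : (∫⁻ w', PS β (fun a w => α a (ς w)) Bs w' (fun n => a (n + 1))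
        ∂(α (a 0) (ς w)))
      = ∫⁻ w', PS β α Bs w' (fun n => a (n + 1)) ∂(α (a 0) (ς w)) :=
      lintegral_congr fun w' => ih w' _ hBs
    rw [hint]
    -- use sensory equivalence for the full cylinder
    have h1 := hς w a (B :: Bs) hmeas
    have hβeq : β (ς w) B = β w B := by
      have h2 := hς w a [B] (by intro C hC; simp at hC; subst hC; exact hB)
      have e : ∀ v : W, PS β α [B] v a = β v B := by
        intro v
        show β v B * ∫⁻ _, (1 : ℝ≥0∞) ∂(α (a 0) v) = β v B
        rw [lintegral_one, (hαprob (a 0) v).measure_univ, mul_one]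
      rwa [e, e] at h2
    have h1' : β w B * ∫⁻ w', PS β α Bs w' (fun n => a (n + 1)) ∂(α (a 0) (ς w))
        = β w B * ∫⁻ w', PS β α Bs w' (fun n => a (n + 1)) ∂(α (a 0) w) := by
      have := h1
      rw [show PS β α (B :: Bs) (ς w) a
          = β (ς w) B * ∫⁻ w', PS β α Bs w' (fun n => a (n + 1)) ∂(α (a 0) (ς w)) from rfl,
        show PS β α (B :: Bs) w a
          = β w B * ∫⁻ w', PS β α Bs w' (fun n => a (n + 1)) ∂(α (a 0) w) from rfl,
        hβeq] at this
      exact this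
    exact h1'
end

section
/- For any two sub-σ-algebras 𝒜, 𝒲, 𝒲' of σ-algebras on spaces A and W respectively, the product σ-algebra of 𝒜 with the intersection 𝒲 ∩ 𝒲' is contained in the intersection of the product σ-algebras: 𝒜 ⊗ (𝒲 ∩ 𝒲') ⊆ (𝒜 ⊗ 𝒲) ∩ (𝒜 ⊗ 𝒲'). Moreover, this inclusion can be strict: there exist a set A with σ-algebra 𝒜 and a set W with σ-algebras 𝒲, 𝒲' such that 𝒜 ⊗ (𝒲 ∩ 𝒲') ⊊ (𝒜 ⊗ 𝒲) ∩ (𝒜 ⊗ 𝒲'). -/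
open MeasureTheory MeasurableSpace Set Cardinal Function

noncomputable section Stmt16Aux

/-- The countable-cocountable σ-algebra. -/
def mCC (X : Type*) : MeasurableSpace X where
  MeasurableSet' S := S.Countable ∨ Sᶜ.Countable
  measurableSet_empty := Or.inl countable_empty
  measurableSet_compl S h := by
    rcases h with h | h
    · exact Or.inr (by simpa using h)
    · exact Or.inl h
  measurableSet_iUnion s hs := by
    by_cases h : ∀ n, (s n).Countable
    · exact Or.inl (countable_iUnion h)
    · push_neg at h
      obtain ⟨n, hn⟩ := h
      rcases hs n with h' | h'
      · exact absurd h' hn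
      · exact Or.inr (h'.mono (by simp [Set.compl_iUnion]; exact Set.iInter_subset _ n))

/-- The σ-algebra of sets invariant in the second coordinate off a countable set. -/
def mInv (X : Type*) : MeasurableSpace (X × X) where
  MeasurableSet' E := ∃ D : Set X, D.Countable ∧
    ∀ w ∉ D, ∀ w' ∉ D, ∀ a, ((a, w) ∈ E ↔ (a, w') ∈ E)
  measurableSet_empty := ⟨∅, countable_empty, by simp⟩
  measurableSet_compl E h := by
    obtain ⟨D, hD, h⟩ := h
    exact ⟨D, hD, fun w hw w' hw' a => by simp only [Set.mem_compl_iff]; rw [h w hw w' hw' a]⟩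
  measurableSet_iUnion s hs := by
    choose D hD h using hs
    refine ⟨⋃ n, D n, countable_iUnion hD, fun w hw w' hw' a => ?_⟩
    simp only [Set.mem_iUnion] at *
    constructor
    · rintro ⟨n, hn⟩
      exact ⟨n, (h n w (fun c => hw ⟨n, c⟩) w' (fun c => hw' ⟨n, c⟩) a).1 hn⟩
    · rintro ⟨n, hn⟩
      exact ⟨n, (h n w (fun c => hw ⟨n, c⟩) w' (fun c => hw' ⟨n, c⟩) a).2 hn⟩

theorem prod_mono_right {A X : Type*} (mA : MeasurableSpace A) {m₁ m₂ : MeasurableSpace X}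
    (h : m₁ ≤ m₂) : mA.prod m₁ ≤ mA.prod m₂ :=
  sup_le_sup_left (comap_mono h) _

theorem prodCC_le_mInv {X : Type*} :
    (⊤ : MeasurableSpace X).prod (mCC X) ≤ mInv X := by
  refine sup_le ?_ ?_
  · rintro s ⟨t, -, rfl⟩
    exact ⟨∅, countable_empty, fun w _ w' _ a => Iff.rfl⟩
  · rintro s ⟨t, ht, rfl⟩
    rcases ht with ht | ht
    · refine ⟨t, ht, fun w hw w' hw' a => ?_⟩
      simp only [Set.mem_preimage]
      exact iff_of_false hw hw'
    · refine ⟨tᶜ, ht, fun w hw w' hw' a => ?_⟩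
      simp only [Set.mem_preimage]
      rw [Set.notMem_compl_iff] at hw hw'
      exact iff_of_true hw hw'

theorem diag_not_mInv {X : Type*} (hX : ¬ Countable X) :
    ¬ (mInv X).MeasurableSet' {p : X × X | p.1 = p.2} := by
  rintro ⟨D, hD, h⟩
  have h1 : ∀ S : Set X, S.Countable → ∃ x, x ∉ S := by
    intro S hS
    by_contra hc
    push_neg at hc
    exact hX (Set.countable_univ_iff.mp (hS.mono fun x _ => hc x))
  obtain ⟨w, hw⟩ := h1 D hD
  obtain ⟨w', hw'⟩ := h1 (D ∪ {w}) (hD.union (countable_singleton w))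
  have hw'D : w' ∉ D := fun c => hw' (Or.inl c)
  have : w = w' := (h w hw w' hw'D w).1 rfl
  exact hw' (Or.inr (Set.mem_singleton_iff.mpr this.symm))

/-- A diagonal is product-measurable when the second factor σ-algebra is the comap of the
Borel σ-algebra under an injective real-valued map. -/
theorem diag_mem_prod {X : Type*} (f : X → ℝ) (hf : Function.Injective f) :
    MeasurableSet[(⊤ : MeasurableSpace X).prod (MeasurableSpace.comap f inferInstance)]
      {p : X × X | p.1 = p.2} := by
  have key : {p : X × X | p.1 = p.2} =
      ⋂ q : ℚ, ((Prod.fst ⁻¹' (f ⁻¹' Set.Iio (q : ℝ)) ∩ Prod.snd ⁻¹' (f ⁻¹' Set.Iio (q : ℝ))) ∪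
        ((Prod.fst ⁻¹' (f ⁻¹' Set.Iio (q : ℝ)))ᶜ ∩ (Prod.snd ⁻¹' (f ⁻¹' Set.Iio (q : ℝ)))ᶜ)) := by
    ext ⟨a, b⟩
    simp only [Set.mem_setOf_eq, Set.mem_iInter, Set.mem_union, Set.mem_inter_iff,
      Set.mem_preimage, Set.mem_compl_iff, Set.mem_Iio]
    constructor
    · rintro rfl
      intro q; tauto
    · intro hq
      refine hf (le_antisymm ?_ ?_) <;> by_contra hlt <;> push_neg at hlt
      · obtain ⟨q, h1, h2⟩ := exists_rat_btwn hlt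
        rcases hq q with ⟨c1, c2⟩ | ⟨c1, c2⟩
        · exact lt_asymm c1 h2
        · exact c2 h1
      · obtain ⟨q, h1, h2⟩ := exists_rat_btwn hlt
        rcases hq q with ⟨c1, c2⟩ | ⟨c1, c2⟩
        · exact lt_asymm c2 h2
        · exact c1 h1
  rw [key]
  have hfst : ∀ S : Set X, MeasurableSet[(⊤ : MeasurableSpace X).prod
      (MeasurableSpace.comap f inferInstance)] (Prod.fst ⁻¹' S) := by
    intro S
    exact le_sup_left (α := MeasurableSpace (X × X)) _ ⟨S, trivial, rfl⟩
  have hsnd : ∀ q : ℚ, MeasurableSet[(⊤ : MeasurableSpace X).prod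
      (MeasurableSpace.comap f inferInstance)] (Prod.snd ⁻¹' (f ⁻¹' Set.Iio (q : ℝ))) := by
    intro q
    exact le_sup_right (α := MeasurableSpace (X × X)) _
      ⟨f ⁻¹' Set.Iio (q : ℝ), ⟨Set.Iio (q : ℝ), measurableSet_Iio, rfl⟩, rfl⟩
  exact MeasurableSet.iInter fun q =>
    ((hfst _).inter (hsnd q)).union (((hfst _).compl).inter ((hsnd q).compl))

end Stmt16Aux


noncomputable section Stmt16Construction

/-- Perfect set property, cardinality form: an uncountable Borel subset of `ℝ` has
cardinality continuum. -/
theorem psp {B : Set ℝ} (hB : MeasurableSet B) (h : ¬ B.Countable) : #B = 𝔠 := by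
  have : StandardBorelSpace B := hB.standardBorel
  have hnc : ¬ Countable B := by rwa [countable_coe_iff]
  have e := PolishSpace.measurableEquivNatBoolOfNotCountable (α := B) hnc
  have : #B = #(ℕ → Bool) := Cardinal.mk_congr e.toEquiv
  rw [this]
  simp [Cardinal.mk_arrow]

theorem borel_card : #{S : Set ℝ | MeasurableSet S} ≤ 𝔠 := by
  have h1 : (inferInstance : MeasurableSpace ℝ) = .generateFrom (Set.range Set.Iio) := by
    rw [BorelSpace.measurable_eq (α := ℝ)]
    exact borel_eq_generateFrom_Iio ℝ
  have h2 : #(Set.range (Set.Iio : ℝ → Set ℝ)) ≤ 𝔠 := by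
    apply (Cardinal.mk_range_le).trans
    rw [Cardinal.mk_real]
  calc #{S : Set ℝ | MeasurableSet S}
      = #{S : Set ℝ | MeasurableSet[.generateFrom (Set.range Set.Iio)] S} := by rw [← h1]
    _ ≤ 𝔠 := MeasurableSpace.cardinal_measurableSet_le_continuum h2

end Stmt16Construction

noncomputable section Stmt16Rec

/-- The index type: a well-ordered type of cardinality continuum. -/
abbrev OO : Type := (Cardinal.continuum.{0}).ord.ToType

abbrev BS : Type := {S : Set ℝ // MeasurableSet S}

theorem mk_BS_le : #BS ≤ 𝔠 := by
  have := borel_card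
  rwa [show #{S : Set ℝ | MeasurableSet S} = #BS from rfl] at this

instance : Nonempty BS := ⟨⟨∅, MeasurableSet.empty⟩⟩

theorem mk_pairs_le : #(BS × BS) ≤ 𝔠 := by
  have : #(BS × BS) = #BS * #BS := by simp [Cardinal.mk_prod]
  rw [this]
  calc #BS * #BS ≤ 𝔠 * 𝔠 := mul_le_mul' mk_BS_le mk_BS_le
    _ = 𝔠 := Cardinal.mul_eq_self Cardinal.aleph0_le_continuum

theorem mk_OO : #OO = 𝔠 := Cardinal.mk_ord_toType 𝔠

def pairEmb : (BS × BS) ↪ OO :=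
  (Cardinal.le_def (BS × BS) OO |>.mp (by rw [mk_OO]; exact mk_pairs_le)).some

/-- An enumeration of all pairs of Borel sets by the index type. -/
def pairEnum : OO → BS × BS := Function.invFun pairEmb

theorem pairEnum_surj : Function.Surjective pairEnum :=
  Function.invFun_surjective pairEmb.injective

def usedX (i : OO) (prev : ∀ j : OO, j < i → ℝ × ℝ) : Set ℝ :=
  Set.range fun p : {j : OO // j < i} => (prev p.1 p.2).1

def usedY (i : OO) (prev : ∀ j : OO, j < i → ℝ × ℝ) : Set ℝ :=
  Set.range fun p : {j : OO // j < i} => (prev p.1 p.2).2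

theorem mk_usedX_lt (i : OO) (prev : ∀ j : OO, j < i → ℝ × ℝ) : #(usedX i prev) < 𝔠 :=
  Cardinal.mk_range_le.trans_lt (Cardinal.mk_Iio_ord_toType i)

theorem mk_usedY_lt (i : OO) (prev : ∀ j : OO, j < i → ℝ × ℝ) : #(usedY i prev) < 𝔠 :=
  Cardinal.mk_range_le.trans_lt (Cardinal.mk_Iio_ord_toType i)

theorem diff_nonempty_of_small {B X : Set ℝ} (hB : MeasurableSet B) (h : ¬ B.Countable)
    (hX : #X < 𝔠) : (B \ X).Nonempty := by
  rw [Set.nonempty_iff_ne_empty]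
  intro hc
  rw [Set.diff_eq_empty] at hc
  exact absurd ((psp hB h) ▸ Cardinal.mk_le_mk_of_subset hc) (not_le.mpr hX)


open scoped Classical in
def goodSet (i : OO) (prev : ∀ j : OO, j < i → ℝ × ℝ) : Set (ℝ × ℝ) :=
  if ¬ ((pairEnum i).1.1).Countable ∧ ¬ ((pairEnum i).1.1)ᶜ.Countable ∧
      ¬ ((pairEnum i).2.1).Countable ∧ ¬ ((pairEnum i).2.1)ᶜ.Countable then
    ((pairEnum i).1.1 \ usedX i prev) ×ˢ (((pairEnum i).2.1)ᶜ \ usedY i prev)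
  else
    (Set.univ \ usedX i prev) ×ˢ (Set.univ \ usedY i prev)

theorem goodSet_nonempty (i : OO) (prev : ∀ j : OO, j < i → ℝ × ℝ) :
    (goodSet i prev).Nonempty := by
  unfold goodSet
  split_ifs with h
  · exact Set.Nonempty.prod
      (diff_nonempty_of_small (pairEnum i).1.2 h.1 (mk_usedX_lt i prev))
      (diff_nonempty_of_small (pairEnum i).2.2.compl h.2.2.2 (mk_usedY_lt i prev))
  · exact Set.Nonempty.prod
      (diff_nonempty_of_small MeasurableSet.univ Cardinal.not_countable_real (mk_usedX_lt i prev))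
      (diff_nonempty_of_small MeasurableSet.univ Cardinal.not_countable_real (mk_usedY_lt i prev))

def FF : OO → ℝ × ℝ :=
  (IsWellFounded.wf (r := ((· < ·) : OO → OO → Prop))).fix
    fun i prev => (goodSet_nonempty i prev).some

theorem FF_mem (i : OO) : FF i ∈ goodSet i fun j _ => FF j := by
  have := WellFounded.fix_eq (IsWellFounded.wf (r := ((· < ·) : OO → OO → Prop)))
    (fun i prev => (goodSet_nonempty i prev).some) i
  rw [show FF i = _ from this]
  exact (goodSet_nonempty i _).some_mem

end Stmt16Rec

noncomputable section Stmt16Key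

def uu (i : OO) : ℝ := (FF i).1
def vv (i : OO) : ℝ := (FF i).2

theorem FF_fst_not_used (i : OO) : (FF i).1 ∉ usedX i fun j _ => FF j := by
  have h := FF_mem i
  unfold goodSet at h
  split_ifs at h with hc
  · exact h.1.2
  · exact h.1.2

theorem FF_snd_not_used (i : OO) : (FF i).2 ∉ usedY i fun j _ => FF j := by
  have h := FF_mem i
  unfold goodSet at h
  split_ifs at h with hc
  · exact h.2.2
  · exact h.2.2

theorem uu_inj : Function.Injective uu := by
  intro i j hij
  by_contra hne
  rcases lt_or_gt_of_ne hne with h | h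
  · exact FF_fst_not_used j ⟨⟨i, h⟩, hij⟩
  · exact FF_fst_not_used i ⟨⟨j, h⟩, hij.symm⟩

theorem vv_inj : Function.Injective vv := by
  intro i j hij
  by_contra hne
  rcases lt_or_gt_of_ne hne with h | h
  · exact FF_snd_not_used j ⟨⟨i, h⟩, hij⟩
  · exact FF_snd_not_used i ⟨⟨j, h⟩, hij.symm⟩

theorem key_dichotomy (B C : Set ℝ) (hB : MeasurableSet B) (hC : MeasurableSet C)
    (hEq : uu ⁻¹' B = vv ⁻¹' C) :
    (uu ⁻¹' B).Countable ∨ ((uu ⁻¹' B)ᶜ).Countable := by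
  by_cases h1 : B.Countable
  · exact Or.inl (h1.preimage uu_inj)
  by_cases h2 : Bᶜ.Countable
  · exact Or.inr (by rw [← Set.preimage_compl]; exact h2.preimage uu_inj)
  by_cases h3 : C.Countable
  · exact Or.inl (by rw [hEq]; exact h3.preimage vv_inj)
  by_cases h4 : Cᶜ.Countable
  · exact Or.inr (by rw [hEq, ← Set.preimage_compl]; exact h4.preimage vv_inj)
  exfalso
  obtain ⟨i, hi⟩ := pairEnum_surj (⟨B, hB⟩, ⟨C, hC⟩)
  have hm := FF_mem i
  unfold goodSet at hm
  rw [hi] at hm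
  rw [if_pos ⟨h1, h2, h3, h4⟩] at hm
  have hub : uu i ∈ B := hm.1.1
  have hvc : vv i ∉ C := hm.2.1
  have : i ∈ uu ⁻¹' B := hub
  rw [hEq] at this
  exact hvc this

theorem OO_not_countable : ¬ Countable OO := by
  intro h
  have h1 : #OO ≤ ℵ₀ := Cardinal.mk_le_aleph0
  rw [mk_OO] at h1
  exact absurd h1 (not_le.mpr Cardinal.aleph0_lt_continuum)

end Stmt16Key


open MeasurableSpace in
/-- `𝒜 ⊗ (𝒲 ⊓ 𝒲') ⊆ (𝒜 ⊗ 𝒲) ⊓ (𝒜 ⊗ 𝒲')` always holds, and the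
inclusion can be strict. -/
theorem stmt16 :
    (∀ (A W : Type) (mA : MeasurableSpace A) (mW mW' : MeasurableSpace W),
      mA.prod (mW ⊓ mW') ≤ (mA.prod mW) ⊓ (mA.prod mW')) ∧
    (∃ (A W : Type) (mA : MeasurableSpace A) (mW mW' : MeasurableSpace W),
      mA.prod (mW ⊓ mW') < (mA.prod mW) ⊓ (mA.prod mW')) := by
  constructor
  · intro A W mA mW mW'
    exact le_inf (prod_mono_right mA inf_le_left) (prod_mono_right mA inf_le_right)
  · refine ⟨OO, OO, ⊤, MeasurableSpace.comap uu inferInstance,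
      MeasurableSpace.comap vv inferInstance, ?_⟩
    rw [lt_iff_le_not_ge]
    refine ⟨le_inf (prod_mono_right _ inf_le_left) (prod_mono_right _ inf_le_right), ?_⟩
    intro hc
    have hd1 : MeasurableSet[(⊤ : MeasurableSpace OO).prod
        (MeasurableSpace.comap uu inferInstance)] {p : OO × OO | p.1 = p.2} :=
      diag_mem_prod uu uu_inj
    have hd2 : MeasurableSet[(⊤ : MeasurableSpace OO).prod
        (MeasurableSpace.comap vv inferInstance)] {p : OO × OO | p.1 = p.2} :=
      diag_mem_prod vv vv_inj
    have hdInf : MeasurableSet[((⊤ : MeasurableSpace OO).prod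
        (MeasurableSpace.comap uu inferInstance)) ⊓ ((⊤ : MeasurableSpace OO).prod
        (MeasurableSpace.comap vv inferInstance))] {p : OO × OO | p.1 = p.2} :=
      measurableSet_inf.mpr ⟨hd1, hd2⟩
    have hdL : MeasurableSet[(⊤ : MeasurableSpace OO).prod
        ((MeasurableSpace.comap uu inferInstance) ⊓ (MeasurableSpace.comap vv inferInstance))]
        {p : OO × OO | p.1 = p.2} := hc _ hdInf
    have hCC : (MeasurableSpace.comap uu (inferInstance : MeasurableSpace ℝ)) ⊓
        (MeasurableSpace.comap vv inferInstance) ≤ mCC OO := by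
      intro s hs
      obtain ⟨hsu, hsv⟩ := measurableSet_inf.mp hs
      obtain ⟨B, hB, hBs⟩ := hsu
      obtain ⟨C, hC, hCs⟩ := hsv
      have hEq : uu ⁻¹' B = vv ⁻¹' C := hBs.trans hCs.symm
      have := key_dichotomy B C hB hC hEq
      rw [hBs] at this
      exact this
    have hfin : (⊤ : MeasurableSpace OO).prod
        ((MeasurableSpace.comap uu inferInstance) ⊓ (MeasurableSpace.comap vv inferInstance)) ≤
        mInv OO := (prod_mono_right ⊤ hCC).trans prodCC_le_mInv
    exact diag_not_mInv OO_not_countable (hfin _ hdL)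
end
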